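/- Let m ≥ 2 be an integer and c a real constant with |c| ≤ m−1. Define u : (0,∞) → ℝ by u(r) = (∫₀^r (sinh t)^(m-1) dt) / (sinh r)^(m-1). Then |c·u(r)| < 1 for all r > 0, and the function w(r) = c·u(r)/√(1 − c²·u(r)²) is differentiable and satisfies w'(r) = c·(1 + w(r)²)^(3/2) − (m−1)·coth(r)·w(r)·(1 + w(r)²) for all r > 0. -/

import Mathlib

/-- For `m ≥ 2` and `|c| ≤ m-1`, with
`u r = (∫₀^r (sinh t)^(m-1) dt)/(sinh r)^(m-1)`, one has `|c · u r| < 1` for all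
`r > 0`, and `w = c u/√(1 - c²u²)` is differentiable and satisfies
`w' = c (1+w²)^{3/2} - (m-1) coth r · w (1+w²)` on `(0,∞)`. -/
theorem stmt_8 (m : ℕ) (hm : 2 ≤ m) (c : ℝ) (hc : |c| ≤ (m : ℝ) - 1)
    (u : ℝ → ℝ)
    (hu : ∀ r : ℝ, u r =
      (∫ t in (0:ℝ)..r, Real.sinh t ^ (m - 1)) / Real.sinh r ^ (m - 1))
    (w : ℝ → ℝ)
    (hw : ∀ r : ℝ, w r = c * u r / Real.sqrt (1 - c ^ 2 * u r ^ 2)) :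
    ∀ r : ℝ, 0 < r → |c * u r| < 1 ∧
      HasDerivAt w (c * (1 + w r ^ 2) ^ ((3:ℝ)/2)
        - ((m : ℝ) - 1) * (Real.cosh r / Real.sinh r) * w r * (1 + w r ^ 2)) r := by
  intro r hr
  have h1m : 1 ≤ m := by omega
  have hcast : ((m - 1 : ℕ) : ℝ) = (m : ℝ) - 1 := by
    rw [Nat.cast_sub h1m, Nat.cast_one]
  have hKpos : (0:ℝ) < (m:ℝ) - 1 := by
    have : (2:ℝ) ≤ (m:ℝ) := by exact_mod_cast hm
    linarith
  have hsr : 0 < Real.sinh r := Real.sinh_pos_iff.2 hr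
  have hS : (0:ℝ) < Real.sinh r ^ (m-1) := pow_pos hsr _
  have hcont : Continuous fun t => Real.sinh t ^ (m-1) := Real.continuous_sinh.pow _
  have hIpos : 0 < ∫ t in (0:ℝ)..r, Real.sinh t ^ (m-1) :=
    intervalIntegral.intervalIntegral_pos_of_pos_on (hcont.intervalIntegrable 0 r)
      (fun x hx => pow_pos (Real.sinh_pos_iff.2 hx.1) _) hr
  have hupos : 0 < u r := by rw [hu r]; exact div_pos hIpos hS
  -- FTC bound
  have hcont2 : Continuous fun x => ((m-1:ℕ):ℝ) * Real.sinh x ^ (m-1-1) * Real.cosh x := by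
    fun_prop
  have hftc : (∫ t in (0:ℝ)..r, ((m-1:ℕ):ℝ) * Real.sinh t ^ (m-1-1) * Real.cosh t)
      = Real.sinh r ^ (m-1) - Real.sinh 0 ^ (m-1) :=
    intervalIntegral.integral_eq_sub_of_hasDerivAt
      (fun x _ => (Real.hasDerivAt_sinh x).pow _) (hcont2.intervalIntegrable 0 r)
  have h0 : Real.sinh 0 ^ (m-1) = 0 := by
    rw [Real.sinh_zero]; exact zero_pow (by omega)
  have hpowr : ∀ x : ℝ, Real.sinh x ^ (m-1) = Real.sinh x ^ (m-1-1) * Real.sinh x := by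
    intro x; rw [← pow_succ]; congr 1; omega
  have key : ((m:ℝ)-1) * (∫ t in (0:ℝ)..r, Real.sinh t ^ (m-1)) < Real.sinh r ^ (m-1) := by
    have hint1 : IntervalIntegrable (fun x => ((m-1:ℕ):ℝ) * Real.sinh x ^ (m-1-1) * Real.cosh x)
        MeasureTheory.volume 0 r := hcont2.intervalIntegrable 0 r
    have hint2 : IntervalIntegrable (fun t => ((m:ℝ)-1) * Real.sinh t ^ (m-1))
        MeasureTheory.volume 0 r := (continuous_const.mul hcont).intervalIntegrable 0 r
    have hpos : 0 < ∫ t in (0:ℝ)..r,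
        (((m-1:ℕ):ℝ) * Real.sinh t ^ (m-1-1) * Real.cosh t
          - ((m:ℝ)-1) * Real.sinh t ^ (m-1)) := by
      refine intervalIntegral.intervalIntegral_pos_of_pos_on (hint1.sub hint2) (fun x hx => ?_) hr
      have hsx : 0 < Real.sinh x := Real.sinh_pos_iff.2 hx.1
      have hcs : Real.sinh x < Real.cosh x := Real.sinh_lt_cosh x
      have hp : 0 < Real.sinh x ^ (m-1-1) := pow_pos hsx _
      rw [hcast, hpowr x]
      nlinarith [mul_pos (mul_pos hKpos hp) (sub_pos.2 hcs)]
    rw [intervalIntegral.integral_sub hint1 hint2, hftc, h0,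
      intervalIntegral.integral_const_mul] at hpos
    linarith
  have habs : |c * u r| < 1 := by
    rw [abs_mul, abs_of_pos hupos]
    calc |c| * u r ≤ ((m:ℝ)-1) * u r := mul_le_mul_of_nonneg_right hc hupos.le
      _ < 1 := by rw [hu r, ← mul_div_assoc, div_lt_one hS]; exact key
  refine ⟨habs, ?_⟩
  -- derivative of u
  have hI : HasDerivAt (fun x => ∫ t in (0:ℝ)..x, Real.sinh t ^ (m-1))
      (Real.sinh r ^ (m-1)) r :=
    intervalIntegral.integral_hasDerivAt_right (hcont.intervalIntegrable 0 r)
      (hcont.stronglyMeasurableAtFilter _ _) hcont.continuousAt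
  have hSder : HasDerivAt (fun x => Real.sinh x ^ (m-1))
      (((m-1:ℕ):ℝ) * Real.sinh r ^ (m-1-1) * Real.cosh r) r :=
    (Real.hasDerivAt_sinh r).pow _
  set u' : ℝ := 1 - ((m:ℝ)-1) * (Real.cosh r / Real.sinh r) * u r with hu'def
  have huder : HasDerivAt u u' r := by
    have h := hI.div hSder hS.ne'
    have hfun : u = fun x => (∫ t in (0:ℝ)..x, Real.sinh t ^ (m-1)) / Real.sinh x ^ (m-1) :=
      funext hu
    change HasDerivAt (fun x => (∫ t in (0:ℝ)..x, Real.sinh t ^ (m-1)) / Real.sinh x ^ (m-1)) _ r at h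
    rw [← hfun] at h
    convert h using 1
    rw [hu'def, hu r, hcast, hpowr r]
    have h1 : Real.sinh r ^ (m-1-1) ≠ 0 := (pow_pos hsr _).ne'
    field_simp
  have h' := abs_lt.1 habs
  have hApos : 0 < 1 - c^2 * u r ^ 2 := by nlinarith
  set s : ℝ := Real.sqrt (1 - c^2 * u r ^ 2) with hsdef
  have hs2 : s^2 = 1 - c^2 * u r ^ 2 := Real.sq_sqrt hApos.le
  have hspos : 0 < s := Real.sqrt_pos.2 hApos
  have hA : HasDerivAt (fun x => 1 - c ^ 2 * u x ^ 2) (-(c^2 * (2 * u r * u'))) r := by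
    have h1 : HasDerivAt (fun x => u x ^ 2) (2 * u r * u') r := by
      have h2 : HasDerivAt (fun x => u x ^ 2) (((2:ℕ):ℝ) * u r ^ (2-1) * u') r := huder.pow 2
      convert h2 using 1
      norm_num
    simpa [mul_assoc] using (h1.const_mul (c^2)).const_sub 1
  have hsder : HasDerivAt (fun x => Real.sqrt (1 - c^2 * u x ^ 2))
      (-(c^2 * (2 * u r * u')) / (2 * s)) r := hA.sqrt hApos.ne'
  have hwder : HasDerivAt w
      ((c * u' * s - c * u r * (-(c^2 * (2 * u r * u')) / (2 * s))) / s ^ 2) r := by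
    have hfun : w = fun x => c * u x / Real.sqrt (1 - c^2 * u x ^ 2) := funext hw
    rw [hfun]
    exact (huder.const_mul c).div hsder hspos.ne'
  have hw1 : w r = c * u r / s := hw r
  have h1w : 1 + w r ^ 2 = (1/s)^2 := by
    rw [hw1, div_pow]
    field_simp
    linarith [hs2]
  have h32 : (1 + w r ^ 2) ^ ((3:ℝ)/2) = 1/s^3 := by
    rw [h1w, ← Real.rpow_natCast (1/s) 2, ← Real.rpow_mul (by positivity)]
    norm_num
  convert hwder using 1
  rw [h32, h1w, hw1, hu'def]
  field_simp

  ring_nf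
  linear_combination (c*(((m:ℝ)-1)*Real.cosh r*u r - Real.sinh r)) * hs2
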